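/- For every prime p > 3, (−1)^{(p−1)/2}·C(p−1, (p−1)/2) ≡ 4^{p−1} (mod p²). -/

import Mathlib

open Finset

-- expansion lemma: product of (1 + ε f j) with ε² = 0
lemma my_prod_eps {R : Type*} [CommRing R] {ε : R} (hε : ε ^ 2 = 0)
    (s : Finset ℕ) (f : ℕ → R) :
    ∏ j ∈ s, (1 + ε * f j) = 1 + ε * ∑ j ∈ s, f j := by
  classical
  induction s using Finset.induction with
  | empty => simp
  | @insert a s ha ih =>
    rw [prod_insert ha, ih, sum_insert ha]
    have h2 : (1 + ε * f a) * (1 + ε * ∑ j ∈ s, f j)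
        = 1 + ε * (f a + ∑ j ∈ s, f j) + ε ^ 2 * (f a * ∑ j ∈ s, f j) := by ring
    rw [h2, hε, zero_mul, add_zero]

-- pair split
lemma my_sum_pair {R : Type*} [AddCommMonoid R] (m : ℕ) (f : ℕ → R) :
    ∑ i ∈ range (2 * m), f i = ∑ j ∈ range m, (f (2 * j) + f (2 * j + 1)) := by
  induction m with
  | zero => simp
  | succ m ih =>
    have : 2 * (m + 1) = 2 * m + 1 + 1 := by ring
    rw [this, sum_range_succ, sum_range_succ, ih, sum_range_succ]
    rw [add_assoc]

lemma my_choose_mod {p : ℕ} (hp : p.Prime) :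
    ∀ i, i ≤ p - 1 → (((p - 1).choose i : ZMod p)) = (-1) ^ i := by
  intro i
  induction i with
  | zero => simp
  | succ i ih =>
    intro hi
    have hi' : i ≤ p - 1 := le_of_lt (Nat.lt_of_succ_le hi)
    have hlt : i + 1 < p := by omega
    have hsucc : p - 1 + 1 = p := Nat.succ_pred_eq_of_pos hp.pos
    have h1 : p.choose (i + 1) = (p - 1).choose i + (p - 1).choose (i + 1) := by
      conv_lhs => rw [← hsucc]
      rw [Nat.choose_succ_succ]
    have hdvd : p ∣ p.choose (i + 1) := hp.dvd_choose_self (Nat.succ_ne_zero i) hlt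
    have h0 : ((p.choose (i + 1) : ℕ) : ZMod p) = 0 :=
      (ZMod.natCast_eq_zero_iff _ _).mpr hdvd
    have := congrArg (fun x : ℕ => (x : ZMod p)) h1
    simp only [Nat.cast_add] at this
    rw [h0, ih hi'] at this
    have : ((p - 1).choose (i + 1) : ZMod p) = -(-1) ^ i := by linear_combination -this
    rw [this, pow_succ]
    ring

-- transfer: mod p equality gives eps-multiplied equality mod p^2
lemma my_transfer {p : ℕ} (a b : ℤ) (h : (a : ZMod p) = (b : ZMod p)) :
    (p : ZMod (p ^ 2)) * (a : ZMod (p ^ 2)) = (p : ZMod (p ^ 2)) * (b : ZMod (p ^ 2)) := by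
  have hd : (p : ℤ) ∣ a - b := by
    rwa [← sub_eq_zero, ← Int.cast_sub, ZMod.intCast_zmod_eq_zero_iff_dvd] at h
  obtain ⟨c, hc⟩ := hd
  have hz : ((p : ZMod (p ^ 2))) ^ 2 = 0 := by
    have h0 : (((p ^ 2 : ℕ)) : ZMod (p ^ 2)) = 0 := ZMod.natCast_self _
    push_cast at h0; exact h0
  have key : (p : ZMod (p ^ 2)) * (a : ZMod (p ^ 2)) - (p : ZMod (p ^ 2)) * (b : ZMod (p ^ 2))
      = (((p : ℤ) * (a - b) : ℤ) : ZMod (p ^ 2)) := by push_cast; ring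
  rw [hc] at key
  have h2 : ((((p : ℤ) * ((p : ℤ) * c)) : ℤ) : ZMod (p ^ 2))
      = ((p : ZMod (p ^ 2))) ^ 2 * (c : ZMod (p ^ 2)) := by push_cast; ring
  rw [h2, hz, zero_mul] at key
  linear_combination key


theorem stmt_17 (p : ℕ) (hp : p.Prime) (hp3 : 3 < p) :
    (-1 : ZMod (p ^ 2)) ^ ((p - 1) / 2) * ((p - 1).choose ((p - 1) / 2) : ZMod (p ^ 2)) =
      (4 : ZMod (p ^ 2)) ^ (p - 1) := by
  obtain ⟨m, hm⟩ : ∃ m, p = 2 * m + 1 := by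
    obtain ⟨k, hk⟩ := hp.odd_of_ne_two (by omega)
    exact ⟨k, by omega⟩
  have hm2 : 2 ≤ m := by omega
  have hp1 : p - 1 = 2 * m := by omega
  have hdiv : (p - 1) / 2 = m := by omega
  set ε : ZMod (p ^ 2) := (p : ZMod (p ^ 2)) with hεdef
  have hε : ε ^ 2 = 0 := by
    have h0 : (((p ^ 2 : ℕ)) : ZMod (p ^ 2)) = 0 := ZMod.natCast_self _
    push_cast at h0; exact h0
  -- units
  have hu : ∀ k : ℕ, 0 < k → k < p → IsUnit ((k : ZMod (p ^ 2))) := by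
    intro k hk hkp
    rw [ZMod.isUnit_iff_coprime]
    exact (Nat.Coprime.pow_right 2
      ((hp.coprime_iff_not_dvd.mpr (fun h => by
        have := Nat.le_of_dvd hk h; omega)).symm))
  have hcancel : ∀ (a b : ZMod (p ^ 2)) (k : ℕ), 0 < k → k < p →
      a * (k : ZMod (p ^ 2)) = b * (k : ZMod (p ^ 2)) → a = b := by
    intro a b k hk hkp h
    exact (hu k hk hkp).mul_right_cancel h
  set Hm : ZMod (p ^ 2) := ∑ i ∈ range m, (((i + 1 : ℕ)) : ZMod (p ^ 2))⁻¹ with hHm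
  -- Step A: choose formula
  have hfacnat : (Nat.factorial m) * ((p - 1).choose m) = ∏ i ∈ range m, (p - 1 - i) := by
    rw [← Nat.descFactorial_eq_factorial_mul_choose, Nat.descFactorial_eq_prod_range]
  have hfac : ∀ i ∈ range m, ((p - 1 - i : ℕ) : ZMod (p ^ 2)) =
      (-(((i + 1 : ℕ)) : ZMod (p ^ 2))) * (1 + ε * (-((((i + 1 : ℕ)) : ZMod (p ^ 2))⁻¹))) := by
    intro i hi
    rw [mem_range] at hi
    have h1 : p - 1 - i = p - (i + 1) := by omega
    have h2 : i + 1 ≤ p := by omega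
    rw [h1, Nat.cast_sub h2]
    have h3 : (((i + 1 : ℕ)) : ZMod (p ^ 2)) * (((i + 1 : ℕ)) : ZMod (p ^ 2))⁻¹ = 1 :=
      ZMod.mul_inv_of_unit _ (hu (i + 1) (by omega) (by omega))
    have : (-(((i + 1 : ℕ)) : ZMod (p ^ 2))) * (1 + ε * (-((((i + 1 : ℕ)) : ZMod (p ^ 2))⁻¹)))
        = -(((i + 1 : ℕ)) : ZMod (p ^ 2)) + ε * ((((i + 1 : ℕ)) : ZMod (p ^ 2)) * (((i + 1 : ℕ)) : ZMod (p ^ 2))⁻¹) := by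
      ring
    rw [this, h3, mul_one]
    ring
  have hprodfact : (∏ i ∈ range m, (((i + 1 : ℕ)) : ZMod (p ^ 2))) = (((Nat.factorial m) : ℕ) : ZMod (p ^ 2)) := by
    rw [← Nat.cast_prod]
    exact_mod_cast congrArg (fun x : ℕ => (x : ZMod (p ^ 2))) (Finset.prod_range_add_one_eq_factorial m)
  have hA' : (((Nat.factorial m) : ℕ) : ZMod (p ^ 2)) * ((p - 1).choose m : ZMod (p ^ 2))
      = (((Nat.factorial m) : ℕ) : ZMod (p ^ 2)) * ((-1) ^ m * (1 - ε * Hm)) := by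
    have hc := congrArg (fun x : ℕ => (x : ZMod (p ^ 2))) hfacnat
    simp only [Nat.cast_mul, Nat.cast_prod] at hc
    rw [hc, prod_congr rfl hfac, prod_mul_distrib, my_prod_eps hε]
    have hneg : (∏ i ∈ range m, (-(((i + 1 : ℕ)) : ZMod (p ^ 2))))
        = (-1) ^ m * ∏ i ∈ range m, (((i + 1 : ℕ)) : ZMod (p ^ 2)) := by
      have h1 : (∏ i ∈ range m, (-(((i + 1 : ℕ)) : ZMod (p ^ 2))))
          = ∏ i ∈ range m, ((-1) * (((i + 1 : ℕ)) : ZMod (p ^ 2))) :=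
        prod_congr rfl (fun i _ => by ring)
      rw [h1, prod_mul_distrib, prod_const, card_range]
    rw [hneg, hprodfact, sum_neg_distrib, ← hHm]
    ring
  have hmfu : IsUnit (((Nat.factorial m) : ℕ) : ZMod (p ^ 2)) := by
    rw [ZMod.isUnit_iff_coprime]
    refine Nat.Coprime.pow_right 2 ((hp.coprime_iff_not_dvd.mpr ?_).symm)
    rw [hp.dvd_factorial]
    omega
  have hA : ((p - 1).choose m : ZMod (p ^ 2)) = (-1) ^ m * (1 - ε * Hm) :=
    hmfu.mul_left_cancel hA'
  -- Step B
  have hbn : 2 ^ p = (∑ i ∈ range (2 * m), p.choose (i + 1)) + 2 := by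
    have h := Nat.sum_range_choose p
    have hp2m : p + 1 = (2 * m) + 1 + 1 := by omega
    rw [hp2m, sum_range_succ, sum_range_succ'] at h
    have hpp : 2 * m + 1 = p := by omega
    rw [hpp, Nat.choose_self, Nat.choose_zero_right] at h
    omega
  have hterm : ∀ i ∈ range (2 * m), (p.choose (i + 1) : ZMod (p ^ 2))
      = (-1) ^ i * (ε * (((i + 1 : ℕ)) : ZMod (p ^ 2))⁻¹) := by
    intro i hi
    rw [mem_range] at hi
    have hkp : i + 1 < p := by omega
    have h1 : p.choose (i + 1) * (i + 1) = p * ((p - 1).choose i) := by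
      have h := Nat.add_one_mul_choose_eq (p - 1) i
      have hs : p - 1 + 1 = p := by omega
      rw [hs] at h
      omega
    have h2 := congrArg (fun x : ℕ => (x : ZMod (p ^ 2))) h1
    push_cast at h2
    have h3 : ((((p - 1).choose i : ℕ) : ℤ) : ZMod p) = (((-1 : ℤ) ^ i : ℤ) : ZMod p) := by
      push_cast
      exact my_choose_mod hp i (by omega)
    have h4 := my_transfer (p := p) (((p - 1).choose i : ℕ) : ℤ) ((-1) ^ i) h3
    push_cast at h4
    apply hcancel _ _ (i + 1) (by omega) hkp
    have hinv1 : ((((i + 1 : ℕ)) : ZMod (p ^ 2))⁻¹) * (((i + 1 : ℕ)) : ZMod (p ^ 2)) = 1 :=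
      ZMod.inv_mul_of_unit _ (hu (i + 1) (by omega) hkp)
    push_cast at hinv1 ⊢
    linear_combination h2 + h4 - ((-1 : ZMod (p ^ 2)) ^ i * ε) * hinv1
  have hsumB : (2 : ZMod (p ^ 2)) ^ p
      = (∑ i ∈ range (2 * m), (-1 : ZMod (p ^ 2)) ^ i * (ε * (((i + 1 : ℕ)) : ZMod (p ^ 2))⁻¹)) + 2 := by
    have h := congrArg (fun x : ℕ => (x : ZMod (p ^ 2))) hbn
    push_cast at h
    rw [← sum_congr rfl hterm]
    push_cast
    exact h
  -- pair cancellation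
  have hpair : ∀ k : ℕ, 0 < k → k < p →
      ε * (((p - k : ℕ)) : ZMod (p ^ 2))⁻¹ + ε * ((k : ℕ) : ZMod (p ^ 2))⁻¹ = 0 := by
    intro k hk hkp
    have hq1 : 0 < p - k := by omega
    have hq2 : p - k < p := by omega
    apply hcancel _ _ k hk hkp
    apply hcancel _ _ (p - k) hq1 hq2
    have hinvk : (((k : ℕ)) : ZMod (p ^ 2))⁻¹ * ((k : ℕ) : ZMod (p ^ 2)) = 1 :=
      ZMod.inv_mul_of_unit _ (hu k hk hkp)
    have hinvq : ((((p - k : ℕ)) : ZMod (p ^ 2))⁻¹) * (((p - k : ℕ)) : ZMod (p ^ 2)) = 1 :=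
      ZMod.inv_mul_of_unit _ (hu (p - k) hq1 hq2)
    have hcast : (((p - k : ℕ)) : ZMod (p ^ 2)) = ε - ((k : ℕ) : ZMod (p ^ 2)) := by
      rw [Nat.cast_sub (by omega : k ≤ p)]
    linear_combination (ε * ((k : ℕ) : ZMod (p ^ 2))) * hinvq
      + (ε * (((p - k : ℕ)) : ZMod (p ^ 2))) * hinvk
      + ε * ((k : ℕ) : ZMod (p ^ 2)) * (((p - k : ℕ)) : ZMod (p ^ 2)) * (0 : ZMod (p^2))
      + (ε * (((p - k : ℕ)) : ZMod (p ^ 2)) * ((k : ℕ) : ZMod (p ^ 2))) * (0:ZMod (p^2))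
      + hε * 1 + ε * hcast * 1
  -- full harmonic sum over range (2m) is 0
  have hfull : ∑ i ∈ range (2 * m), ε * (((i + 1 : ℕ)) : ZMod (p ^ 2))⁻¹ = 0 := by
    apply Finset.sum_involution (g := fun i _ => 2 * m - 1 - i)
    · intro i hi
      rw [mem_range] at hi
      have h1 : (2 * m - 1 - i) + 1 = p - (i + 1) := by omega
      rw [h1]
      linear_combination hpair (i + 1) (by omega) (by omega)
    · intro i hi _
      rw [mem_range] at hi
      omega
    · intro i hi
      rw [mem_range] at hi ⊢
      omega
    · intro i hi
      rw [mem_range] at hi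
      omega
  -- even-index sum
  have hu2 : IsUnit (2 : ZMod (p ^ 2)) := by
    have h := hu 2 (by omega) (by omega)
    simpa using h
  have hinv2 : (2 : ZMod (p ^ 2))⁻¹ * 2 = 1 := ZMod.inv_mul_of_unit _ hu2
  have heven : ∀ j ∈ range m, ε * (((2 * j + 2 : ℕ)) : ZMod (p ^ 2))⁻¹
      = (2 : ZMod (p ^ 2))⁻¹ * (ε * (((j + 1 : ℕ)) : ZMod (p ^ 2))⁻¹) := by
    intro j hj
    rw [mem_range] at hj
    have hk : 2 * j + 2 < p := by omega
    apply hcancel _ _ (2 * j + 2) (by omega) hk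
    have hia : (((2 * j + 2 : ℕ)) : ZMod (p ^ 2))⁻¹ * (((2 * j + 2 : ℕ)) : ZMod (p ^ 2)) = 1 :=
      ZMod.inv_mul_of_unit _ (hu (2 * j + 2) (by omega) hk)
    have hib : (((j + 1 : ℕ)) : ZMod (p ^ 2))⁻¹ * (((j + 1 : ℕ)) : ZMod (p ^ 2)) = 1 :=
      ZMod.inv_mul_of_unit _ (hu (j + 1) (by omega) (by omega))
    have hsplit : (((2 * j + 2 : ℕ)) : ZMod (p ^ 2))
        = 2 * (((j + 1 : ℕ)) : ZMod (p ^ 2)) := by push_cast; ring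
    linear_combination ε * hia
      - ((2 : ZMod (p ^ 2))⁻¹ * ε * (((j + 1 : ℕ)) : ZMod (p ^ 2))⁻¹) * hsplit
      - (ε * (((j + 1 : ℕ)) : ZMod (p ^ 2))⁻¹ * (((j + 1 : ℕ)) : ZMod (p ^ 2))) * hinv2
      - ε * hib
  -- evaluate the alternating sum
  have hysum : ∑ j ∈ range m, ε * (((2 * j + 2 : ℕ)) : ZMod (p ^ 2))⁻¹
      = (2 : ZMod (p ^ 2))⁻¹ * (ε * Hm) := by
    rw [hHm, mul_sum, mul_sum]
    exact sum_congr rfl heven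
  have hAval : ∑ i ∈ range (2 * m), (-1 : ZMod (p ^ 2)) ^ i * (ε * (((i + 1 : ℕ)) : ZMod (p ^ 2))⁻¹)
      = -(ε * Hm) := by
    rw [my_sum_pair m (fun i => (-1 : ZMod (p ^ 2)) ^ i * (ε * (((i + 1 : ℕ)) : ZMod (p ^ 2))⁻¹))]
    rw [my_sum_pair m (fun i => ε * (((i + 1 : ℕ)) : ZMod (p ^ 2))⁻¹)] at hfull
    have hterm2 : ∀ j ∈ range m,
        ((-1 : ZMod (p ^ 2)) ^ (2 * j) * (ε * (((2 * j + 1 : ℕ)) : ZMod (p ^ 2))⁻¹)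
          + (-1 : ZMod (p ^ 2)) ^ (2 * j + 1) * (ε * (((2 * j + 1 + 1 : ℕ)) : ZMod (p ^ 2))⁻¹))
        = (ε * (((2 * j + 1 : ℕ)) : ZMod (p ^ 2))⁻¹ + ε * (((2 * j + 1 + 1 : ℕ)) : ZMod (p ^ 2))⁻¹)
          - 2 * (ε * (((2 * j + 2 : ℕ)) : ZMod (p ^ 2))⁻¹) := by
      intro j hj
      have h1 : (-1 : ZMod (p ^ 2)) ^ (2 * j) = 1 :=
        Even.neg_one_pow ⟨j, by omega⟩
      have h2 : (-1 : ZMod (p ^ 2)) ^ (2 * j + 1) = -1 :=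
        Odd.neg_one_pow ⟨j, by omega⟩
      have h3 : 2 * j + 1 + 1 = 2 * j + 2 := by omega
      rw [h1, h2, h3]
      ring
    rw [sum_congr rfl hterm2, sum_sub_distrib, hfull, ← mul_sum, hysum]
    have h22 : (2 : ZMod (p ^ 2)) * (2 : ZMod (p ^ 2))⁻¹ = 1 := ZMod.mul_inv_of_unit _ hu2
    linear_combination (-2 * (ε * Hm)) * h22 + (ε * Hm) * hinv2
  have h2p : (2 : ZMod (p ^ 2)) ^ p = 2 - ε * Hm := by
    rw [hsumB, hAval]; ring
  -- Fermat quotient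
  haveI : Fact p.Prime := ⟨hp⟩
  have h2ne : (2 : ZMod p) ≠ 0 := by
    intro h
    rw [show (2 : ZMod p) = ((2 : ℕ) : ZMod p) by norm_cast,
      ZMod.natCast_eq_zero_iff] at h
    have := Nat.le_of_dvd (by norm_num) h
    omega
  have hferm := ZMod.pow_card_sub_one_eq_one h2ne
  have hle : 1 ≤ 2 ^ (p - 1) := Nat.one_le_two_pow
  have hdvd : p ∣ 2 ^ (p - 1) - 1 := by
    rw [← ZMod.natCast_eq_zero_iff]
    push_cast [hle]
    rw [hferm]
    ring
  obtain ⟨c, hc⟩ := hdvd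
  have hc' : 2 ^ (p - 1) = p * c + 1 := by omega
  have hcast2 : (2 : ZMod (p ^ 2)) ^ (p - 1) = ε * (c : ZMod (p ^ 2)) + 1 := by
    have h := congrArg (fun x : ℕ => (x : ZMod (p ^ 2))) hc'
    push_cast at h
    rw [hεdef]
    exact h
  have e1 : (2 : ZMod (p ^ 2)) ^ p = 2 * (2 : ZMod (p ^ 2)) ^ (p - 1) := by
    rw [← pow_succ']
    congr 1
    omega
  have h4eq : (4 : ZMod (p ^ 2)) ^ (p - 1) = ((2 : ZMod (p ^ 2)) ^ (p - 1)) ^ 2 := by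
    rw [show (4 : ZMod (p ^ 2)) = 2 ^ 2 by norm_num, ← pow_mul, ← pow_mul, mul_comm]
  have key4 : (4 : ZMod (p ^ 2)) ^ (p - 1) = 1 - ε * Hm := by
    rw [h4eq, hcast2]
    linear_combination ((c : ZMod (p ^ 2)) ^ 2) * hε + h2p - e1 - 2 * hcast2
  -- conclude
  rw [hdiv, hA, key4]
  have hsq : (-1 : ZMod (p ^ 2)) ^ m * (-1 : ZMod (p ^ 2)) ^ m = 1 := by
    rw [← pow_add]
    exact Even.neg_one_pow ⟨m, rfl⟩
  linear_combination (1 - ε * Hm) * hsq
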